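/- arXiv:1808.07206 — 5 statements merged into one kernel-verified Lean document; each statement's English description precedes it below -/
import Mathlib

section
/- Let $\mathfrak{t}, \mathfrak{t}'$ be the quadratic forms of two nonnegative, compactly resolved, self-adjoint comparable operators $T, T'$ defined with respect to two equivalent inner products $n, n'$ on a common vector space, with $c_H n \le n' \le C_H n$ and $c_V \mathfrak{t} \le \mathfrak{t}' \le C_V \mathfrak{t}$ for positive constants. Then for every $k$ with $\lambda_k(T) \ne 0$: $\frac{c_V}{C_H} \le \frac{\lambda_k(T')}{\lambda_k(T)} \le \frac{C_V}{c_H}$. -/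
/-- The `k`-th min-max eigenvalue of the quadratic form `t` with respect to the
squared-norm functional `nn`, over the form domain `V`. -/
noncomputable def minmaxRQ {H : Type*} [AddCommGroup H] [Module ℝ H]
    (t nn : H → ℝ) (V : Submodule ℝ H) (k : ℕ) : ℝ :=
  ⨅ W : {W : Submodule ℝ H // W ≤ V ∧ Module.finrank ℝ W = k + 1},
    ⨆ u : {u : H // u ∈ (W : Submodule ℝ H) ∧ u ≠ 0}, t (u : H) / nn (u : H)

private lemma sup_comp {ι : Type*} [Nonempty ι] (f g : ι → ℝ) (a b : ℝ)
    (ha : 0 < a) (hb : 0 < b) (hg : ∀ i, 0 ≤ g i)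
    (h1 : ∀ i, b * g i ≤ f i) (h2 : ∀ i, f i ≤ a * g i) :
    (⨆ i, f i) ≤ a * (⨆ i, g i) ∧ b * (⨆ i, g i) ≤ (⨆ i, f i) := by
  by_cases hbdd : BddAbove (Set.range g)
  · have hfbdd : BddAbove (Set.range f) := by
      refine ⟨a * (⨆ i, g i), ?_⟩
      rintro x ⟨i, rfl⟩
      exact (h2 i).trans (mul_le_mul_of_nonneg_left (le_ciSup hbdd i) ha.le)
    constructor
    · exact ciSup_le fun i =>
        (h2 i).trans (mul_le_mul_of_nonneg_left (le_ciSup hbdd i) ha.le)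
    · rw [← le_div_iff₀' hb]
      refine ciSup_le fun i => ?_
      rw [le_div_iff₀' hb]
      exact (h1 i).trans (le_ciSup hfbdd i)
  · have hfub : ¬ BddAbove (Set.range f) := by
      intro ⟨M, hM⟩
      apply hbdd
      refine ⟨M / b, ?_⟩
      rintro x ⟨i, rfl⟩
      rw [le_div_iff₀' hb]
      exact (h1 i).trans (hM ⟨i, rfl⟩)
    rw [Real.iSup_of_not_bddAbove hbdd, Real.iSup_of_not_bddAbove hfub]
    simp

/-- Spectral comparison of comparable operators: `c_V/C_H ≤ λ'_k/λ_k ≤ C_V/c_H`. -/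
theorem stmt10 {H : Type*} [AddCommGroup H] [Module ℝ H]
    (t t' nn nn' : H → ℝ) (V : Submodule ℝ H)
    (cH CH cV CV : ℝ) (hcH : 0 < cH) (hCH : 0 < CH) (hcV : 0 < cV) (hCV : 0 < CV)
    (hn : ∀ u : H, cH * nn u ≤ nn' u ∧ nn' u ≤ CH * nn u)
    (ht : ∀ u : H, cV * t u ≤ t' u ∧ t' u ≤ CV * t u)
    (hnpos : ∀ u : H, u ≠ 0 → 0 < nn u)
    (htpos : ∀ u : H, 0 ≤ t u)
    (k : ℕ) (hk : minmaxRQ t nn V k ≠ 0) :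
    cV / CH ≤ minmaxRQ t' nn' V k / minmaxRQ t nn V k ∧
      minmaxRQ t' nn' V k / minmaxRQ t nn V k ≤ CV / cH := by
  set a := CV / cH with ha_def
  set b := cV / CH with hb_def
  have ha : 0 < a := div_pos hCV hcH
  have hb : 0 < b := div_pos hcV hCH
  -- index type of the infimum is nonempty
  have hne : Nonempty {W : Submodule ℝ H // W ≤ V ∧ Module.finrank ℝ W = k + 1} := by
    by_contra h
    rw [not_nonempty_iff] at h
    apply hk
    unfold minmaxRQ
    exact Real.iInf_of_isEmpty _
  -- each W's nonzero vectors form a nonempty type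
  have hWne : ∀ W : {W : Submodule ℝ H // W ≤ V ∧ Module.finrank ℝ W = k + 1},
      Nonempty {u : H // u ∈ (W : Submodule ℝ H) ∧ u ≠ 0} := by
    intro W
    have hWbot : (W : Submodule ℝ H) ≠ ⊥ := by
      intro hbot
      have := W.2.2
      rw [hbot] at this
      simp [finrank_bot] at this
    obtain ⟨x, hx, hx0⟩ := Submodule.exists_mem_ne_zero_of_ne_bot hWbot
    exact ⟨⟨x, hx, hx0⟩⟩
  -- pointwise Rayleigh quotient bounds
  have hpt : ∀ u : H, u ≠ 0 →
      b * (t u / nn u) ≤ t' u / nn' u ∧ t' u / nn' u ≤ a * (t u / nn u) := by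
    intro u hu
    have hnn : 0 < nn u := hnpos u hu
    have hnn' : 0 < nn' u := lt_of_lt_of_le (mul_pos hcH hnn) (hn u).1
    have ht'pos : 0 ≤ t' u := le_trans (mul_nonneg hcV.le (htpos u)) (ht u).1
    constructor
    · rw [hb_def, div_mul_div_comm]
      exact div_le_div₀ ht'pos (ht u).1 hnn' (hn u).2
    · rw [ha_def, div_mul_div_comm]
      exact div_le_div₀ (mul_nonneg hCV.le (htpos u)) (ht u).2 (mul_pos hcH hnn) (hn u).1
  -- define the per-subspace suprema
  set S : {W : Submodule ℝ H // W ≤ V ∧ Module.finrank ℝ W = k + 1} → ℝ :=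
    fun W => ⨆ u : {u : H // u ∈ (W : Submodule ℝ H) ∧ u ≠ 0}, t (u : H) / nn (u : H)
    with hS
  set S' : {W : Submodule ℝ H // W ≤ V ∧ Module.finrank ℝ W = k + 1} → ℝ :=
    fun W => ⨆ u : {u : H // u ∈ (W : Submodule ℝ H) ∧ u ≠ 0}, t' (u : H) / nn' (u : H)
    with hS'
  have hsup : ∀ W, S' W ≤ a * S W ∧ b * S W ≤ S' W := by
    intro W
    haveI := hWne W
    exact sup_comp (ι := {u : H // u ∈ (W : Submodule ℝ H) ∧ u ≠ 0})
      (fun u => t' (u : H) / nn' (u : H))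
      (fun u => t (u : H) / nn (u : H)) a b ha hb
      (fun u => div_nonneg (htpos _) (hnpos _ u.2.2).le)
      (fun u => (hpt u.1 u.2.2).1) (fun u => (hpt u.1 u.2.2).2)
  have hSnonneg : ∀ W, 0 ≤ S W := by
    intro W
    haveI := hWne W
    exact Real.iSup_nonneg fun u => div_nonneg (htpos _) (hnpos _ u.2.2).le
  have hS'nonneg : ∀ W, 0 ≤ S' W := by
    intro W
    haveI := hWne W
    refine Real.iSup_nonneg fun u => div_nonneg ?_ ?_
    · exact le_trans (mul_nonneg hcV.le (htpos u.1)) (ht u.1).1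
    · exact le_of_lt (lt_of_lt_of_le (mul_pos hcH (hnpos u.1 u.2.2)) (hn u.1).1)
  have hSbdd : BddBelow (Set.range S) := ⟨0, by rintro x ⟨W, rfl⟩; exact hSnonneg W⟩
  have hS'bdd : BddBelow (Set.range S') := ⟨0, by rintro x ⟨W, rfl⟩; exact hS'nonneg W⟩
  have hL : minmaxRQ t nn V k = ⨅ W, S W := rfl
  have hL' : minmaxRQ t' nn' V k = ⨅ W, S' W := rfl
  have hLnonneg : 0 ≤ minmaxRQ t nn V k := by
    rw [hL]; exact le_ciInf hSnonneg
  have hLpos : 0 < minmaxRQ t nn V k := lt_of_le_of_ne hLnonneg (Ne.symm hk)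
  have hupper : minmaxRQ t' nn' V k ≤ a * minmaxRQ t nn V k := by
    rw [hL, hL', ← div_le_iff₀' ha]
    refine le_ciInf fun W => ?_
    rw [div_le_iff₀' ha]
    exact (ciInf_le hS'bdd W).trans (hsup W).1
  have hlower : b * minmaxRQ t nn V k ≤ minmaxRQ t' nn' V k := by
    rw [hL, hL']
    refine le_ciInf fun W => ?_
    exact (mul_le_mul_of_nonneg_left (ciInf_le hSbdd W) hb.le).trans (hsup W).2
  constructor
  · rw [le_div_iff₀ hLpos]
    exact hlower
  · rw [div_le_iff₀ hLpos]
    linarith [hupper]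
end

section
/- Let $a_1, \ldots, a_n > 0$ and let $N_0(\lambda)$ denote the number of $n$-tuples $(i_1, \ldots, i_n)$ of positive integers with $\sum_j (i_j \pi / a_j)^2 \le \lambda$. Let $d$ satisfy $d^2 = \sum_j \pi^2/a_j^2$, let $|R| = \prod_j a_j$, and let $\omega_n$ be the volume of the unit ball in $\mathbb{R}^n$. Then for all $\lambda \ge d^2$: $\frac{\omega_n |R|}{(2\pi)^n}\left(1 - \frac{d}{\sqrt{\lambda}}\right)^n \lambda^{n/2} \le N_0(\lambda) \le \frac{\omega_n |R|}{(2\pi)^n} \lambda^{n/2}$. -/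
open Set MeasureTheory
open scoped ENNReal

namespace Stmt11Aux

def J (k : ℤ) : Set ℝ := if 0 < k then Ioc ((k:ℝ)-1) k else Ico (k:ℝ) ((k:ℝ)+1)

noncomputable def sel (x : ℝ) : ℤ := if 0 < x then ⌈x⌉ else ⌊x⌋

lemma measurableSet_J (k : ℤ) : MeasurableSet (J k) := by
  unfold J; split <;> measurability

lemma volume_J (k : ℤ) : volume (J k) = 1 := by
  unfold J; split
  · rw [Real.volume_Ioc]; norm_num
  · rw [Real.volume_Ico]; norm_num

lemma mem_J_sel {x : ℝ} (hx : x ≠ 0) : x ∈ J (sel x) := by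
  unfold J sel
  by_cases h : 0 < x
  · rw [if_pos h, if_pos (Int.ceil_pos.2 h)]
    exact ⟨by linarith [Int.ceil_lt_add_one x], Int.le_ceil x⟩
  · have hx' : x < 0 := lt_of_le_of_ne (not_lt.1 h) hx
    have hf : (⌊x⌋ : ℝ) ≤ x := Int.floor_le x
    have : ¬ (0 < ⌊x⌋) := by
      intro hc; have : (1:ℝ) ≤ (⌊x⌋:ℝ) := by exact_mod_cast hc
      linarith
    rw [if_neg h, if_neg this]
    exact ⟨Int.floor_le x, Int.lt_floor_add_one x⟩

lemma sel_ne_zero {x : ℝ} (hx : x ≠ 0) : sel x ≠ 0 := by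
  unfold sel
  by_cases h : 0 < x
  · rw [if_pos h]; exact ne_of_gt (Int.ceil_pos.2 h)
  · have hx' : x < 0 := lt_of_le_of_ne (not_lt.1 h) hx
    rw [if_neg h]
    have : ⌊x⌋ < 0 := Int.floor_lt.2 (by norm_num [hx'])
    omega

lemma sel_eq_of_mem {k : ℤ} (hk : k ≠ 0) {x : ℝ} (hx : x ∈ J k) : sel x = k := by
  unfold J at hx; unfold sel
  split at hx
  · rename_i h
    have h1 : (k:ℝ) - 1 < x := hx.1
    have h2 : x ≤ k := hx.2
    have hx0 : 0 < x := by
      have : (1:ℝ) ≤ (k:ℝ) := by exact_mod_cast h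
      linarith
    rw [if_pos hx0]
    exact Int.ceil_eq_iff.2 ⟨by exact_mod_cast h1, h2⟩
  · rename_i h
    have hk' : k < 0 := by omega
    have h1 : (k:ℝ) ≤ x := hx.1
    have h2 : x < (k:ℝ) + 1 := hx.2
    have hx0 : ¬ 0 < x := by
      have : (k:ℝ) + 1 ≤ 0 := by exact_mod_cast (by omega : k + 1 ≤ 0)
      push_cast at this ⊢
      intro hc; linarith
    rw [if_neg hx0]
    exact Int.floor_eq_iff.2 ⟨h1, h2⟩

lemma abs_le_of_mem {k : ℤ} (hk : k ≠ 0) {x : ℝ} (hx : x ∈ J k) :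
    |x| ≤ |(k:ℝ)| ∧ |(k:ℝ)| ≤ |x| + 1 ∧ x ≠ 0 := by
  unfold J at hx
  split at hx
  · rename_i h
    have h1 : (k:ℝ) - 1 < x := hx.1
    have h2 : x ≤ k := hx.2
    have hk1 : (1:ℝ) ≤ (k:ℝ) := by exact_mod_cast h
    have hx0 : 0 < x := by linarith
    rw [abs_of_pos hx0, abs_of_pos (by linarith : (0:ℝ) < (k:ℝ))]
    exact ⟨h2, by linarith, ne_of_gt hx0⟩
  · rename_i h
    have hk' : k < 0 := by omega
    have h1 : (k:ℝ) ≤ x := hx.1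
    have h2 : x < (k:ℝ) + 1 := hx.2
    have hk1 : (k:ℝ) + 1 ≤ 0 := by exact_mod_cast (by omega : k + 1 ≤ 0)
    have hx0 : x < 0 := by linarith
    rw [abs_of_neg hx0, abs_of_neg (by linarith : (k:ℝ) < 0)]
    exact ⟨by linarith, by linarith, ne_of_lt hx0⟩

lemma disjoint_J {k m : ℤ} (hk : k ≠ 0) (hm : m ≠ 0) (hkm : k ≠ m) :
    Disjoint (J k) (J m) := by
  rw [Set.disjoint_left]
  intro x hxk hxm
  exact hkm ((sel_eq_of_mem hk hxk).symm.trans (sel_eq_of_mem hm hxm))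

lemma volume_unitball (n : ℕ) (hn : 1 ≤ n) :
    volume {x : Fin n → ℝ | ∑ j, x j ^ 2 ≤ 1}
      = volume (Metric.ball (0 : EuclideanSpace ℝ (Fin n)) 1) := by
  have hmeas : MeasurableSet {x : Fin n → ℝ | ∑ j, x j ^ 2 ≤ 1} := by
    apply measurableSet_le <;> measurability
  have h1 := (EuclideanSpace.volume_preserving_symm_measurableEquiv_toLp (Fin n)).measure_preimage
    hmeas.nullMeasurableSet
  have h2 : (MeasurableEquiv.toLp 2 (Fin n → ℝ)).symm ⁻¹' {x : Fin n → ℝ | ∑ j, x j ^ 2 ≤ 1}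
      = Metric.closedBall (0 : EuclideanSpace ℝ (Fin n)) 1 := by
    ext y
    simp only [Set.mem_preimage, Set.mem_setOf_eq, Metric.mem_closedBall, dist_zero_right]
    rw [EuclideanSpace.norm_eq]
    constructor
    · intro h
      have : (MeasurableEquiv.toLp 2 (Fin n → ℝ)).symm y = fun j => y j := rfl
      rw [this] at h
      calc Real.sqrt (∑ j, ‖y j‖ ^ 2) ≤ Real.sqrt 1 := by
            apply Real.sqrt_le_sqrt
            simpa [Real.norm_eq_abs, sq_abs] using h
        _ = 1 := Real.sqrt_one
    · intro h
      have h' : ∑ j, ‖y j‖ ^ 2 ≤ 1 := by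
        have hnn : 0 ≤ ∑ j, ‖y j‖ ^ 2 := Finset.sum_nonneg fun j _ => sq_nonneg (‖y j‖)
        have h2 := Real.sq_sqrt hnn
        nlinarith [Real.sqrt_nonneg (∑ j, ‖y j‖ ^ 2)]
      simpa [Real.norm_eq_abs, sq_abs] using h'
  rw [h2] at h1
  haveI : Nonempty (Fin n) := Fin.pos_iff_nonempty.1 (by omega)
  rw [← h1, EuclideanSpace.volume_closedBall, EuclideanSpace.volume_ball]

lemma volume_ellipsoid (n : ℕ) (c : Fin n → ℝ) (hc : ∀ j, 0 < c j) :
    volume {x : Fin n → ℝ | ∑ j, (x j / c j) ^ 2 ≤ 1}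
      = ENNReal.ofReal (∏ j, c j) * volume {x : Fin n → ℝ | ∑ j, x j ^ 2 ≤ 1} := by
  set f : (Fin n → ℝ) →ₗ[ℝ] (Fin n → ℝ) := Matrix.toLin' (Matrix.diagonal fun j => (c j)⁻¹)
  have hdet : LinearMap.det f = ∏ j, (c j)⁻¹ := by
    rw [LinearMap.det_toLin', Matrix.det_diagonal]
  have hdet0 : LinearMap.det f ≠ 0 := by
    rw [hdet]
    exact Finset.prod_ne_zero_iff.2 fun j _ => inv_ne_zero (hc j).ne'
  have hset : {x : Fin n → ℝ | ∑ j, (x j / c j) ^ 2 ≤ 1}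
      = f ⁻¹' {x : Fin n → ℝ | ∑ j, x j ^ 2 ≤ 1} := by
    ext x
    simp only [Set.mem_preimage, Set.mem_setOf_eq]
    have : ∀ j, f x j = (c j)⁻¹ * x j := by
      intro j
      simp [f, Matrix.toLin'_apply, Matrix.mulVec_diagonal]
    constructor <;> intro h <;> [skip; skip] <;>
      · refine le_trans (le_of_eq ?_) h
        apply Finset.sum_congr rfl
        intro j _
        rw [this j, div_eq_inv_mul]
  rw [hset, Measure.addHaar_preimage_linearMap volume hdet0, hdet]
  congr 1
  rw [show ∏ j, (c j)⁻¹ = (∏ j, c j)⁻¹ from Finset.prod_inv_distrib _, inv_inv,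
    abs_of_pos (Finset.prod_pos fun j _ => hc j)]

end Stmt11Aux

namespace Stmt11Aux

lemma triangle (n : ℕ) (b : Fin n → ℝ) (hb : ∀ j, 0 < b j) (x : Fin n → ℝ) (k : Fin n → ℤ)
    (hk : ∀ j, |(k j : ℝ)| ≤ |x j| + 1) (r δ : ℝ) (hr : 0 ≤ r) (hδ : 0 ≤ δ) (hrδ : r + δ ≤ 1)
    (hx : ∑ j, (x j / b j) ^ 2 ≤ r ^ 2) (hsum : ∑ j, (1 / b j) ^ 2 ≤ δ ^ 2) :
    ∑ j, ((k j : ℝ) / b j) ^ 2 ≤ 1 := by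
  set u : EuclideanSpace ℝ (Fin n) := WithLp.toLp 2 fun j => |x j| / b j with hu_def
  set v : EuclideanSpace ℝ (Fin n) := WithLp.toLp 2 fun j => 1 / b j with hv_def
  have hnu : ‖u‖ ≤ r := by
    rw [EuclideanSpace.norm_eq]
    have h1 : ∑ j, ‖u j‖ ^ 2 = ∑ j, (x j / b j) ^ 2 := by
      apply Finset.sum_congr rfl; intro j _
      rw [Real.norm_eq_abs, sq_abs]
      show (|x j| / b j) ^ 2 = _
      rw [div_pow, div_pow, sq_abs]
    rw [h1]
    calc Real.sqrt (∑ j, (x j / b j) ^ 2) ≤ Real.sqrt (r ^ 2) := Real.sqrt_le_sqrt hx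
      _ = r := Real.sqrt_sq hr
  have hnv : ‖v‖ ≤ δ := by
    rw [EuclideanSpace.norm_eq]
    have h1 : ∑ j, ‖v j‖ ^ 2 = ∑ j, (1 / b j) ^ 2 := by
      apply Finset.sum_congr rfl; intro j _
      rw [Real.norm_eq_abs, sq_abs]
    rw [h1]
    calc Real.sqrt (∑ j, (1 / b j) ^ 2) ≤ Real.sqrt (δ ^ 2) := Real.sqrt_le_sqrt hsum
      _ = δ := Real.sqrt_sq hδ
  have htri : ‖u + v‖ ≤ 1 := le_trans (norm_add_le u v) (by linarith)
  have hsq : ∑ j, ‖(u + v) j‖ ^ 2 ≤ 1 := by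
    have h2 : Real.sqrt (∑ j, ‖(u + v) j‖ ^ 2) ≤ 1 := by
      rw [← EuclideanSpace.norm_eq]; exact htri
    have hnn : 0 ≤ ∑ j, ‖(u + v) j‖ ^ 2 := Finset.sum_nonneg fun j _ => sq_nonneg _
    nlinarith [Real.sq_sqrt hnn, Real.sqrt_nonneg (∑ j, ‖(u + v) j‖ ^ 2)]
  refine le_trans (Finset.sum_le_sum fun j _ => ?_) hsq
  have h3 : (u + v) j = |x j| / b j + 1 / b j := rfl
  rw [h3, Real.norm_eq_abs]
  have h4 : (0:ℝ) ≤ |x j| / b j + 1 / b j := by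
    have := hb j; positivity
  rw [abs_of_nonneg h4]
  have h5 : |(k j : ℝ)| / b j ≤ |x j| / b j + 1 / b j := by
    rw [← add_div]
    exact (div_le_div_iff_of_pos_right (hb j)).2 (hk j)
  calc ((k j : ℝ) / b j) ^ 2 = (|(k j : ℝ)| / b j) ^ 2 := by
        rw [div_pow, div_pow, sq_abs]
    _ ≤ (|x j| / b j + 1 / b j) ^ 2 :=
          pow_le_pow_left₀ (div_nonneg (abs_nonneg _) (hb j).le) h5 2
    _ = _ := rfl

end Stmt11Aux

open Stmt11Aux in
/-- Quantitative Weyl law for the Dirichlet counting function of a rectangular box. -/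
theorem stmt11 (n : ℕ) (hn : 1 ≤ n) (a : Fin n → ℝ) (ha : ∀ j, 0 < a j)
    (d : ℝ) (hd0 : 0 ≤ d) (hd : d ^ 2 = ∑ j, Real.pi ^ 2 / a j ^ 2)
    (ω : ℝ) (hω : ω = (volume (Metric.ball (0 : EuclideanSpace ℝ (Fin n)) 1)).toReal)
    (N0 : ℝ → ℕ)
    (hN0 : ∀ lam : ℝ, N0 lam = Nat.card
      {i : Fin n → ℕ // (∀ j, 1 ≤ i j) ∧ ∑ j, ((i j : ℝ) * Real.pi / a j) ^ 2 ≤ lam})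
    (lam : ℝ) (hlam : d ^ 2 ≤ lam) :
    ω * (∏ j, a j) / (2 * Real.pi) ^ n * (1 - d / Real.sqrt lam) ^ n
        * lam ^ ((n : ℝ) / 2) ≤ (N0 lam : ℝ) ∧
      (N0 lam : ℝ) ≤ ω * (∏ j, a j) / (2 * Real.pi) ^ n * lam ^ ((n : ℝ) / 2) := by
  classical
  have hπ : 0 < Real.pi := Real.pi_pos
  haveI hne : Nonempty (Fin n) := Fin.pos_iff_nonempty.1 (by omega)
  have hd2 : 0 < d ^ 2 := by
    rw [hd]
    exact Finset.sum_pos (fun j _ => by have := ha j; positivity) Finset.univ_nonempty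
  have hlam0 : 0 < lam := lt_of_lt_of_le hd2 hlam
  have hsl : 0 < Real.sqrt lam := Real.sqrt_pos.2 hlam0
  set b : Fin n → ℝ := fun j => a j * Real.sqrt lam / Real.pi with hb_def
  have hb : ∀ j, 0 < b j := fun j => by have := ha j; positivity
  have hbsq : ∀ j, b j ^ 2 = a j ^ 2 * lam / Real.pi ^ 2 := by
    intro j
    rw [hb_def]
    dsimp only
    rw [div_pow, mul_pow, Real.sq_sqrt hlam0.le]
  set δ : ℝ := d / Real.sqrt lam with hδ_def
  have hδ0 : 0 ≤ δ := div_nonneg hd0 hsl.le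
  have hδ1 : δ ≤ 1 := by
    rw [hδ_def, div_le_one hsl]
    exact (Real.le_sqrt hd0 hlam0.le).2 hlam
  have hδsq : ∑ j, (1 / b j) ^ 2 = δ ^ 2 := by
    have h1 : ∀ j, (1 / b j) ^ 2 = Real.pi ^ 2 / a j ^ 2 / lam := by
      intro j
      rw [div_pow, one_pow, hbsq j, one_div_div, div_div]
    rw [Finset.sum_congr rfl fun j _ => h1 j, ← Finset.sum_div, ← hd, hδ_def, div_pow,
      Real.sq_sqrt hlam0.le]
  have hcond : ∀ t : Fin n → ℝ,
      ((∑ j, (t j * Real.pi / a j) ^ 2 ≤ lam) ↔ ∑ j, (t j / b j) ^ 2 ≤ 1) := by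
    intro t
    have h1 : ∀ j, (t j / b j) ^ 2 = (t j * Real.pi / a j) ^ 2 / lam := by
      intro j
      rw [div_pow, hbsq j, div_div_eq_mul_div, div_pow, mul_pow, div_div]
    rw [Finset.sum_congr rfl fun j _ => h1 j, ← Finset.sum_div, div_le_one hlam0]
  -- the signed index set
  set T : Set (Fin n → ℤ) :=
    {k | (∀ j, k j ≠ 0) ∧ ∑ j, ((k j : ℝ) * Real.pi / a j) ^ 2 ≤ lam} with hT_def
  have hTmem : ∀ k : Fin n → ℤ,
      (k ∈ T ↔ (∀ j, k j ≠ 0) ∧ ∑ j, ((k j : ℝ) * Real.pi / a j) ^ 2 ≤ lam) := by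
    intro k; rw [hT_def]; rfl
  -- cardinality of T
  have hcardT : Nat.card ↥T = N0 lam * 2 ^ n := by
    have e : ({i : Fin n → ℕ // (∀ j, 1 ≤ i j) ∧ ∑ j, ((i j : ℝ) * Real.pi / a j) ^ 2 ≤ lam}
        × (Fin n → Bool)) ≃ ↥T :=
      { toFun := fun p => ⟨fun j => if p.2 j then (p.1.1 j : ℤ) else -(p.1.1 j : ℤ), by
          obtain ⟨⟨i, hi1, hi2⟩, ε⟩ := p
          rw [hTmem]
          refine ⟨fun j => ?_, ?_⟩
          · dsimp only
            have := hi1 j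
            split <;> omega
          · refine le_trans (le_of_eq (Finset.sum_congr rfl fun j _ => ?_)) hi2
            dsimp only
            have h : (((if ε j then (i j : ℤ) else -(i j : ℤ)) : ℤ) : ℝ) ^ 2
                = ((i j : ℝ)) ^ 2 := by
              split <;> push_cast <;> ring
            rw [div_pow, div_pow, mul_pow, mul_pow, h]⟩
        invFun := fun k => (⟨fun j => (k.1 j).natAbs, by
          obtain ⟨k, hk⟩ := k
          rw [hTmem] at hk
          obtain ⟨hk1, hk2⟩ := hk
          refine ⟨fun j => by have := hk1 j; dsimp only; omega, ?_⟩
          refine le_trans (le_of_eq (Finset.sum_congr rfl fun j _ => ?_)) hk2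
          dsimp only
          have h : (((k j).natAbs : ℝ)) ^ 2 = ((k j : ℝ)) ^ 2 := by
            rw [Nat.cast_natAbs, Int.cast_abs, sq_abs]
          rw [div_pow, div_pow, mul_pow, mul_pow, h]⟩, fun j => decide (0 < k.1 j))
        left_inv := by
          rintro ⟨⟨i, hi1, hi2⟩, ε⟩
          refine Prod.ext (Subtype.ext (funext fun j => ?_)) (funext fun j => ?_)
          · have := hi1 j
            dsimp only
            rcases Bool.eq_false_or_eq_true (ε j) with hε | hε <;> simp [hε] <;> omega
          · have := hi1 j
            dsimp only
            rcases Bool.eq_false_or_eq_true (ε j) with hε | hε <;> simp [hε] <;> omega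
        right_inv := by
          rintro ⟨k, hk⟩
          have hk1 := ((hTmem k).1 hk).1
          apply Subtype.ext
          funext j
          have := hk1 j
          dsimp only
          by_cases h : 0 < k j
          · rw [if_pos (by simp [h] : decide (0 < k j) = true)]
            omega
          · rw [if_neg (by simp [h] : ¬ decide (0 < k j) = true)]
            omega }
    rw [← Nat.card_congr e, Nat.card_prod, hN0 lam]
    congr 1
    rw [Nat.card_eq_fintype_card]
    simp
  -- finiteness of T
  have hTfin : T.Finite := by
    set M : Fin n → ℤ := fun j => ⌈Real.sqrt lam * a j / Real.pi⌉ with hM_def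
    apply Set.Finite.subset (Set.Finite.pi fun j => Set.finite_Icc (-(M j)) (M j))
    intro k hk
    obtain ⟨hk1, hk2⟩ := (hTmem k).1 hk
    rw [Set.mem_univ_pi]
    intro j
    have hterm : ((k j : ℝ) * Real.pi / a j) ^ 2 ≤ lam :=
      le_trans (Finset.single_le_sum (f := fun j => ((k j : ℝ) * Real.pi / a j) ^ 2)
        (fun j _ => sq_nonneg _) (Finset.mem_univ j)) hk2
    have habs : |(k j : ℝ)| * Real.pi / a j ≤ Real.sqrt lam := by
      rw [← Real.sqrt_sq (by have := ha j; positivity : (0:ℝ) ≤ |(k j : ℝ)| * Real.pi / a j)]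
      apply Real.sqrt_le_sqrt
      calc (|(k j : ℝ)| * Real.pi / a j) ^ 2 = ((k j : ℝ) * Real.pi / a j) ^ 2 := by
            rw [div_pow, div_pow, mul_pow, mul_pow, sq_abs]
        _ ≤ lam := hterm
    have habs2 : |(k j : ℝ)| ≤ Real.sqrt lam * a j / Real.pi := by
      have haj := ha j
      rw [div_le_iff₀ haj] at habs
      rw [le_div_iff₀ hπ]
      nlinarith
    have habs3 : |(k j : ℝ)| ≤ (M j : ℝ) := le_trans habs2 (Int.le_ceil _)
    rw [abs_le] at habs3
    constructor
    · exact_mod_cast habs3.1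
    · exact_mod_cast habs3.2
  -- the cubes
  set C : (Fin n → ℤ) → Set (Fin n → ℝ) := fun k => Set.univ.pi fun j => J (k j) with hC_def
  have hCmeas : ∀ k, MeasurableSet (C k) :=
    fun k => MeasurableSet.univ_pi fun j => measurableSet_J (k j)
  have hCvol : ∀ k, volume (C k) = 1 := by
    intro k
    rw [hC_def]
    dsimp only
    rw [volume_pi_pi]
    simp [volume_J]
  have hUnionVol : volume (⋃ k ∈ T, C k) = (Nat.card ↥T : ℝ≥0∞) := by
    have h1 : (⋃ k ∈ T, C k) = ⋃ k ∈ hTfin.toFinset, C k := by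
      simp only [Set.Finite.mem_toFinset]
    have hdisj : (↑hTfin.toFinset : Set (Fin n → ℤ)).PairwiseDisjoint C := by
      intro k hk k' hk' hne
      rw [Set.Finite.coe_toFinset] at hk hk'
      have hk0 := ((hTmem k).1 hk).1
      have hk0' := ((hTmem k').1 hk').1
      apply Set.disjoint_left.2
      intro x hx hx'
      apply hne
      funext j
      have h1 := (Set.mem_univ_pi.1 hx) j
      have h2 := (Set.mem_univ_pi.1 hx') j
      rw [← sel_eq_of_mem (hk0 j) h1, ← sel_eq_of_mem (hk0' j) h2]
    rw [h1, measure_biUnion_finset hdisj fun k _ => hCmeas k,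
      Finset.sum_congr rfl fun k _ => hCvol k, Finset.sum_const, nsmul_eq_mul, mul_one]
    congr 1
    rw [Nat.card_coe_set_eq, Set.ncard_eq_toFinset_card T hTfin]
  set W : ℝ≥0∞ := volume (Metric.ball (0 : EuclideanSpace ℝ (Fin n)) 1) with hW_def
  have hWfin : W ≠ ⊤ := measure_ball_lt_top.ne
  have hprodb0 : (0:ℝ) ≤ ∏ j, b j := Finset.prod_nonneg fun j _ => (hb j).le
  -- upper bound in ENNReal
  have hsub1 : (⋃ k ∈ T, C k) ⊆ {x : Fin n → ℝ | ∑ j, (x j / b j) ^ 2 ≤ 1} := by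
    refine Set.iUnion₂_subset fun k hk => ?_
    obtain ⟨hk0, hkc⟩ := (hTmem k).1 hk
    intro x hx
    have hkS : ∑ j, ((k j : ℝ) / b j) ^ 2 ≤ 1 := (hcond fun j => (k j : ℝ)).1 hkc
    refine le_trans (Finset.sum_le_sum fun j _ => ?_) hkS
    have hmem := (Set.mem_univ_pi.1 hx) j
    have h := abs_le_of_mem (hk0 j) hmem
    have h2 : (x j) ^ 2 ≤ ((k j : ℝ)) ^ 2 := by
      rw [← sq_abs (x j), ← sq_abs ((k j : ℝ))]
      exact pow_le_pow_left₀ (abs_nonneg _) h.1 2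
    have hbj2 : (0:ℝ) < b j ^ 2 := by have := hb j; positivity
    calc (x j / b j) ^ 2 = x j ^ 2 / b j ^ 2 := div_pow _ _ 2
      _ ≤ ((k j : ℝ)) ^ 2 / b j ^ 2 := (div_le_div_iff_of_pos_right hbj2).2 h2
      _ = ((k j : ℝ) / b j) ^ 2 := (div_pow _ _ 2).symm
  have hUb : (Nat.card ↥T : ℝ≥0∞) ≤ ENNReal.ofReal (∏ j, b j) * W := by
    rw [← hUnionVol]
    calc volume (⋃ k ∈ T, C k) ≤ volume {x : Fin n → ℝ | ∑ j, (x j / b j) ^ 2 ≤ 1} :=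
          measure_mono hsub1
      _ = ENNReal.ofReal (∏ j, b j) * W := by
          rw [volume_ellipsoid n b hb, volume_unitball n hn]
  have hUr : (N0 lam : ℝ) * 2 ^ n ≤ (∏ j, b j) * ω := by
    have h := ENNReal.toReal_mono (ENNReal.mul_ne_top ENNReal.ofReal_ne_top hWfin) hUb
    rw [ENNReal.toReal_natCast, ENNReal.toReal_mul, ENNReal.toReal_ofReal hprodb0] at h
    rw [hω]
    calc (N0 lam : ℝ) * 2 ^ n = ((N0 lam * 2 ^ n : ℕ) : ℝ) := by push_cast; ring
      _ = ((Nat.card ↥T : ℕ) : ℝ) := by rw [hcardT]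
      _ ≤ (∏ j, b j) * W.toReal := h
  -- product of b
  have hprodb : ∏ j, b j = (∏ j, a j) * (Real.sqrt lam) ^ n / Real.pi ^ n := by
    rw [hb_def]
    dsimp only
    rw [show (fun j => a j * Real.sqrt lam / Real.pi) = fun j => a j * (Real.sqrt lam / Real.pi)
      from funext fun j => by ring]
    rw [Finset.prod_mul_distrib, Finset.prod_const, Finset.card_univ, Fintype.card_fin,
      div_pow, mul_div_assoc]
  have hbp : (∏ j, b j) * Real.pi ^ n = (∏ j, a j) * (Real.sqrt lam) ^ n := by
    rw [hprodb]
    exact div_mul_cancel₀ _ (pow_pos hπ n).ne'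
  have hlrp : lam ^ ((n : ℝ) / 2) = (Real.sqrt lam) ^ n := by
    rw [Real.sqrt_eq_rpow, ← Real.rpow_natCast (lam ^ (1 / (2:ℝ))) n,
      ← Real.rpow_mul hlam0.le]
    congr 1
    ring
  constructor
  · -- lower bound
    by_cases hδeq : δ = 1
    · have h0 : 1 - d / Real.sqrt lam = 0 := by rw [← hδ_def, hδeq]; ring
      rw [h0, zero_pow (by omega : n ≠ 0), mul_zero, zero_mul]
      positivity
    · have hr : 0 < 1 - δ := by
        rcases lt_or_eq_of_le hδ1 with h | h
        · linarith
        · exact absurd h hδeq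
      set r : ℝ := 1 - δ with hr_def
      have hrb : ∀ j, 0 < r * b j := fun j => mul_pos hr (hb j)
      have hsub2 : {x : Fin n → ℝ | ∑ j, (x j / (r * b j)) ^ 2 ≤ 1} ⊆
          (⋃ k ∈ T, C k) ∪ ⋃ j, {x : Fin n → ℝ | x j = 0} := by
        intro x hx
        by_cases hx0 : ∀ j, x j ≠ 0
        · left
          have hxr : ∑ j, (x j / b j) ^ 2 ≤ r ^ 2 := by
            have h1 : ∀ j, (x j / (r * b j)) ^ 2 = (x j / b j) ^ 2 / r ^ 2 := by
              intro j
              rw [mul_comm r (b j), ← div_div, div_pow]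
            rw [Set.mem_setOf_eq, Finset.sum_congr rfl fun j _ => h1 j, ← Finset.sum_div,
              div_le_one (by positivity)] at hx
            exact hx
          set k : Fin n → ℤ := fun j => sel (x j) with hk_def
          have hk0 : ∀ j, k j ≠ 0 := fun j => sel_ne_zero (hx0 j)
          have hmem : x ∈ C k := Set.mem_univ_pi.2 fun j => mem_J_sel (hx0 j)
          have hkabs : ∀ j, |(k j : ℝ)| ≤ |x j| + 1 :=
            fun j => (abs_le_of_mem (hk0 j) (mem_J_sel (hx0 j))).2.1
          have hkT : ∑ j, ((k j : ℝ) / b j) ^ 2 ≤ 1 :=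
            triangle n b hb x k hkabs r δ hr.le hδ0 (by rw [hr_def]; linarith) hxr hδsq.le
          exact Set.mem_biUnion ((hTmem k).2 ⟨hk0, (hcond fun j => (k j : ℝ)).2 hkT⟩) hmem
        · right
          push_neg at hx0
          obtain ⟨j, hj⟩ := hx0
          exact Set.mem_iUnion.2 ⟨j, hj⟩
      have hnull : volume (⋃ j, {x : Fin n → ℝ | x j = 0}) = 0 := by
        refine measure_iUnion_null fun j => ?_
        exact Measure.pi_hyperplane (fun _ => volume) j 0
      have hLb : ENNReal.ofReal (r ^ n * ∏ j, b j) * W ≤ (Nat.card ↥T : ℝ≥0∞) := by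
        rw [← hUnionVol]
        have hEr : volume {x : Fin n → ℝ | ∑ j, (x j / (r * b j)) ^ 2 ≤ 1}
            = ENNReal.ofReal (r ^ n * ∏ j, b j) * W := by
          rw [volume_ellipsoid n (fun j => r * b j) hrb, volume_unitball n hn]
          congr 2
          rw [Finset.prod_mul_distrib, Finset.prod_const, Finset.card_univ, Fintype.card_fin]
        rw [← hEr]
        calc volume {x : Fin n → ℝ | ∑ j, (x j / (r * b j)) ^ 2 ≤ 1}
            ≤ volume ((⋃ k ∈ T, C k) ∪ ⋃ j, {x : Fin n → ℝ | x j = 0}) := measure_mono hsub2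
          _ ≤ volume (⋃ k ∈ T, C k) + volume (⋃ j, {x : Fin n → ℝ | x j = 0}) :=
              measure_union_le _ _
          _ = volume (⋃ k ∈ T, C k) := by rw [hnull, add_zero]
      have hLr : r ^ n * (∏ j, b j) * ω ≤ (N0 lam : ℝ) * 2 ^ n := by
        have h := ENNReal.toReal_mono (ENNReal.natCast_ne_top _) hLb
        rw [ENNReal.toReal_natCast, ENNReal.toReal_mul,
          ENNReal.toReal_ofReal (by positivity)] at h
        calc r ^ n * (∏ j, b j) * ω = (r ^ n * ∏ j, b j) * W.toReal := by
              rw [hω]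
          _ ≤ ((Nat.card ↥T : ℕ) : ℝ) := h
          _ = (N0 lam : ℝ) * 2 ^ n := by rw [hcardT]; push_cast; ring
      -- conclude
      rw [hlrp, mul_pow]
      have hLr' : r ^ n * (∏ j, a j) * (Real.sqrt lam) ^ n * ω
          ≤ (N0 lam : ℝ) * 2 ^ n * Real.pi ^ n := by
        have h := mul_le_mul_of_nonneg_right hLr (by positivity : (0:ℝ) ≤ Real.pi ^ n)
        calc r ^ n * (∏ j, a j) * (Real.sqrt lam) ^ n * ω
            = r ^ n * (∏ j, b j) * ω * Real.pi ^ n := by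
              linear_combination (-(r ^ n * ω)) * hbp
          _ ≤ (N0 lam : ℝ) * 2 ^ n * Real.pi ^ n := h
      rw [div_mul_eq_mul_div, div_mul_eq_mul_div, div_le_iff₀ (by positivity)]
      calc ω * (∏ j, a j) * (1 - d / Real.sqrt lam) ^ n * (Real.sqrt lam) ^ n
          = r ^ n * (∏ j, a j) * (Real.sqrt lam) ^ n * ω := by rw [hr_def, hδ_def]; ring
        _ ≤ (N0 lam : ℝ) * 2 ^ n * Real.pi ^ n := hLr'
        _ = (N0 lam : ℝ) * (2 ^ n * Real.pi ^ n) := by ring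
  · -- upper bound
    rw [hlrp, mul_pow]
    have hUr' : (N0 lam : ℝ) * 2 ^ n * Real.pi ^ n
        ≤ (∏ j, a j) * (Real.sqrt lam) ^ n * ω := by
      have h := mul_le_mul_of_nonneg_right hUr (by positivity : (0:ℝ) ≤ Real.pi ^ n)
      calc (N0 lam : ℝ) * 2 ^ n * Real.pi ^ n ≤ (∏ j, b j) * ω * Real.pi ^ n := h
        _ = (∏ j, a j) * (Real.sqrt lam) ^ n * ω := by linear_combination ω * hbp
    rw [div_mul_eq_mul_div, le_div_iff₀ (by positivity)]
    nlinarith [hUr']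
end

section
/- Let $R$ and $R'$ be $n$-dimensional rectangular boxes with volumes $|R| < |R'|$ and codiagonals $d, d'$ (where the codiagonal of a box with sides $a_j$ satisfies $d^2 = \sum_j \pi^2/a_j^2$). Set $\lambda_0 = (d')^2\big(1 - (|R|/|R'|)^{1/n}\big)^{-2}$. Then for all $\lambda > \lambda_0$, the Dirichlet counting function of $R$ is at most the Dirichlet counting function of $R'$: $N_0^R(\lambda) \le N_0^{R'}(\lambda)$. -/
open MeasureTheory Set Pointwise ENNReal
set_option maxHeartbeats 1000000

namespace Stmt13

variable {n : ℕ}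

/-- The half-open lattice cell with upper corner `(i j * c j)_j`. -/
def cell (c : Fin n → ℝ) (i : Fin n → ℕ) : Set (Fin n → ℝ) :=
  Set.univ.pi fun j => Set.Ioc (((i j : ℝ) - 1) * c j) ((i j : ℝ) * c j)

lemma measurable_cell (c : Fin n → ℝ) (i : Fin n → ℕ) : MeasurableSet (cell c i) :=
  MeasurableSet.univ_pi fun _ => measurableSet_Ioc

lemma volume_cell (c : Fin n → ℝ) (i : Fin n → ℕ) :
    volume (cell c i) = ∏ j, ENNReal.ofReal (c j) := by
  rw [cell, volume_pi_pi]
  refine Finset.prod_congr rfl fun j _ => ?_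
  rw [Real.volume_Ioc]
  congr 1
  ring

lemma cell_disjoint {c : Fin n → ℝ} (hc : ∀ j, 0 < c j) {i k : Fin n → ℕ} (h : i ≠ k) :
    Disjoint (cell c i) (cell c k) := by
  rw [Set.disjoint_left]
  intro x hx hx'
  obtain ⟨j, hj⟩ := Function.ne_iff.1 h
  have h1 := hx j (Set.mem_univ j)
  have h2 := hx' j (Set.mem_univ j)
  simp only [Set.mem_Ioc] at h1 h2
  rcases lt_or_gt_of_ne hj with hlt | hlt
  · have : (i j : ℝ) ≤ (k j : ℝ) - 1 := by
      have : (i j : ℝ) + 1 ≤ k j := by exact_mod_cast hlt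
      linarith
    have := mul_le_mul_of_nonneg_right this (hc j).le
    linarith [h1.2, h2.1]
  · have : (k j : ℝ) ≤ (i j : ℝ) - 1 := by
      have : (k j : ℝ) + 1 ≤ i j := by exact_mod_cast hlt
      linarith
    have := mul_le_mul_of_nonneg_right this (hc j).le
    linarith [h1.1, h2.2]

lemma finite_T (c : Fin n → ℝ) (hc : ∀ j, 0 < c j) (lam : ℝ) :
    {i : Fin n → ℕ | (∀ j, 1 ≤ i j) ∧ ∑ j, ((i j : ℝ) * c j) ^ 2 ≤ lam}.Finite := by
  refine Set.Finite.subset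
    (Set.Finite.pi (fun j => Set.finite_Iic (⌊Real.sqrt lam / c j⌋₊))) ?_
  rintro i ⟨h1, h2⟩ j -
  have hterm : ((i j : ℝ) * c j) ^ 2 ≤ lam :=
    le_trans (Finset.single_le_sum (fun k _ => sq_nonneg ((i k : ℝ) * c k))
      (Finset.mem_univ j)) h2
  have hpos : 0 ≤ (i j : ℝ) * c j := mul_nonneg (Nat.cast_nonneg _) (hc j).le
  have hlamnn : 0 ≤ lam := le_trans (sq_nonneg _) hterm
  have : (i j : ℝ) * c j ≤ Real.sqrt lam := (Real.le_sqrt hpos hlamnn).2 hterm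
  have : (i j : ℝ) ≤ Real.sqrt lam / c j := (le_div_iff₀ (hc j)).2 this
  exact Set.mem_Iic.2 (Nat.le_floor this)

/-- The positive orthant part of the ball of radius `ρ`. -/
def orthBall (n : ℕ) (ρ : ℝ) : Set (Fin n → ℝ) :=
  {x | (∀ j, 0 < x j) ∧ ∑ j, x j ^ 2 ≤ ρ ^ 2}

lemma smul_orthBall {s : ℝ} (hs : 0 < s) (ρ : ℝ) :
    s • orthBall n ρ = orthBall n (s * ρ) := by
  ext x
  rw [Set.mem_smul_set_iff_inv_smul_mem₀ hs.ne']
  constructor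
  · rintro ⟨h1, h2⟩
    constructor
    · intro j
      have := h1 j
      simp only [Pi.smul_apply, smul_eq_mul] at this
      nlinarith [inv_pos.2 hs]
    · have : ∑ j, (s⁻¹ * x j) ^ 2 ≤ ρ ^ 2 := by
        simpa [Pi.smul_apply, smul_eq_mul] using h2
      have h3 : ∑ j, x j ^ 2 = s ^ 2 * ∑ j, (s⁻¹ * x j) ^ 2 := by
        rw [Finset.mul_sum]
        refine Finset.sum_congr rfl fun j _ => ?_
        field_simp
      rw [h3, mul_pow]
      exact mul_le_mul_of_nonneg_left this (sq_nonneg s)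
  · rintro ⟨h1, h2⟩
    constructor
    · intro j
      simp only [Pi.smul_apply, smul_eq_mul]
      exact mul_pos (inv_pos.2 hs) (h1 j)
    · have h3 : ∑ j, (s⁻¹ • x) j ^ 2 = (s⁻¹) ^ 2 * ∑ j, x j ^ 2 := by
        rw [Finset.mul_sum]
        refine Finset.sum_congr rfl fun j _ => ?_
        simp [Pi.smul_apply, smul_eq_mul]; ring
      show ∑ j, (s⁻¹ • x) j ^ 2 ≤ ρ ^ 2
      rw [h3]
      rw [inv_pow, inv_mul_le_iff₀ (by positivity)]
      calc ∑ j, x j ^ 2 ≤ (s * ρ) ^ 2 := h2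
        _ = s ^ 2 * ρ ^ 2 := by ring

lemma volume_orthBall_smul {s : ℝ} (hs : 0 < s) (ρ : ℝ) :
    volume (orthBall n (s * ρ)) = ENNReal.ofReal s ^ n * volume (orthBall n ρ) := by
  rw [← smul_orthBall hs, Measure.addHaar_smul]
  congr 1
  rw [Module.finrank_fintype_fun_eq_card, Fintype.card_fin,
    abs_of_nonneg (by positivity), ENNReal.ofReal_pow hs.le]

end Stmt13

open Stmt13 in
/-- Eventual Dirichlet subspectrality of a larger-volume box to a
smaller-volume box, beyond the explicit threshold `λ₀`. -/
theorem stmt13 (n : ℕ) (hn : 1 ≤ n) (a a' : Fin n → ℝ)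
    (ha : ∀ j, 0 < a j) (ha' : ∀ j, 0 < a' j)
    (hvol : ∏ j, a j < ∏ j, a' j)
    (d d' : ℝ) (hd0 : 0 ≤ d) (hd'0 : 0 ≤ d')
    (hd : d ^ 2 = ∑ j, Real.pi ^ 2 / a j ^ 2)
    (hd' : d' ^ 2 = ∑ j, Real.pi ^ 2 / a' j ^ 2)
    (lam0 : ℝ)
    (hlam0 : lam0 = d' ^ 2 * ((1 - ((∏ j, a j) / ∏ j, a' j) ^ ((1 : ℝ) / n))⁻¹) ^ 2)
    (lam : ℝ) (hlam : lam0 < lam) :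
    Nat.card {i : Fin n → ℕ //
        (∀ j, 1 ≤ i j) ∧ ∑ j, ((i j : ℝ) * Real.pi / a j) ^ 2 ≤ lam}
      ≤ Nat.card {i : Fin n → ℕ //
        (∀ j, 1 ≤ i j) ∧ ∑ j, ((i j : ℝ) * Real.pi / a' j) ^ 2 ≤ lam} := by
  classical
  -- the cell widths
  set c : Fin n → ℝ := fun j => Real.pi / a j with hc_def
  set c' : Fin n → ℝ := fun j => Real.pi / a' j with hc'_def
  have hπ := Real.pi_pos
  have hc : ∀ j, 0 < c j := fun j => div_pos hπ (ha j)
  have hc' : ∀ j, 0 < c' j := fun j => div_pos hπ (ha' j)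
  have hmul : ∀ (b : Fin n → ℝ) (i : Fin n → ℕ) (j : Fin n),
      (i j : ℝ) * Real.pi / b j = (i j : ℝ) * (Real.pi / b j) := by
    intro b i j; ring
  -- volumes
  have hP : 0 < ∏ j, a j := Finset.prod_pos fun j _ => ha j
  have hP' : 0 < ∏ j, a' j := Finset.prod_pos fun j _ => ha' j
  set P := ∏ j, a j
  set P' := ∏ j, a' j
  set t : ℝ := (P / P') ^ ((1 : ℝ) / n) with ht_def
  have hq0 : 0 < P / P' := div_pos hP hP'
  have hq1 : P / P' < 1 := (div_lt_one hP').2 hvol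
  have ht0 : 0 < t := Real.rpow_pos_of_pos hq0 _
  have ht1 : t < 1 := Real.rpow_lt_one hq0.le hq1 (by positivity)
  have hn0 : (n : ℝ) ≠ 0 := Nat.cast_ne_zero.2 (by omega)
  have htn : t ^ n = P / P' := by
    rw [ht_def, ← Real.rpow_natCast ((P / P') ^ ((1:ℝ)/n)) n,
      ← Real.rpow_mul hq0.le, one_div, inv_mul_cancel₀ hn0, Real.rpow_one]
  -- d' > 0
  have hd'pos : 0 < d' := by
    have : 0 < d' ^ 2 := by
      rw [hd']
      refine Finset.sum_pos (fun j _ => div_pos (by positivity) (pow_pos (ha' j) 2)) ?_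
      exact ⟨⟨0, by omega⟩, Finset.mem_univ _⟩
    nlinarith [this]
  have h1t : 0 < 1 - t := by linarith
  have hlam0pos : 0 < lam0 := by
    rw [hlam0]
    exact mul_pos (pow_pos hd'pos 2) (pow_pos (inv_pos.2 h1t) 2)
  have hlampos : 0 < lam := hlam0pos.trans hlam
  set r : ℝ := Real.sqrt lam with hr_def
  have hrpos : 0 < r := Real.sqrt_pos.2 hlampos
  have hr2 : r ^ 2 = lam := Real.sq_sqrt hlampos.le
  -- the key threshold inequality : d' < (1 - t) * r
  have hkey : d' < (1 - t) * r := by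
    have h1 : (d' * (1 - t)⁻¹) ^ 2 < r ^ 2 := by
      rw [hr2, mul_pow]
      calc d' ^ 2 * ((1 - t)⁻¹) ^ 2 = lam0 := hlam0.symm
        _ < lam := hlam
    have h2 : d' * (1 - t)⁻¹ < r :=
      lt_of_pow_lt_pow_left₀ 2 hrpos.le h1
    calc d' = d' * (1 - t)⁻¹ * (1 - t) := by field_simp
      _ < r * (1 - t) := by
          exact mul_lt_mul_of_pos_right h2 h1t
      _ = (1 - t) * r := by ring
  have hrd' : 0 < r - d' := by nlinarith
  set s : ℝ := (r - d') / r with hs_def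
  have hs0 : 0 < s := div_pos hrd' hrpos
  have hsr : s * r = r - d' := div_mul_cancel₀ _ hrpos.ne'
  have hts : t < s := by
    rw [hs_def, lt_div_iff₀ hrpos]
    nlinarith
  -- finite sets of lattice points
  have hfinT := finite_T c hc lam
  have hfinT' := finite_T c' hc' lam
  set F : Finset (Fin n → ℕ) := hfinT.toFinset with hF_def
  set F' : Finset (Fin n → ℕ) := hfinT'.toFinset with hF'_def
  set C : ℝ≥0∞ := ∏ j, ENNReal.ofReal (c j) with hC_def
  set C' : ℝ≥0∞ := ∏ j, ENNReal.ofReal (c' j) with hC'_def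
  -- upper bound : F.card * C ≤ volume (orthBall n r)
  have hupper : (F.card : ℝ≥0∞) * C ≤ volume (orthBall n r) := by
    have hdisj : (F : Set (Fin n → ℕ)).PairwiseDisjoint (cell c) := by
      intro i _ k _ hik
      exact cell_disjoint hc hik
    have hμ : volume (⋃ i ∈ F, cell c i) = (F.card : ℝ≥0∞) * C := by
      rw [measure_biUnion_finset hdisj (fun i _ => measurable_cell c i)]
      simp [volume_cell, Finset.sum_const, nsmul_eq_mul, hC_def]
    rw [← hμ]
    refine measure_mono (Set.iUnion₂_subset fun i hi => ?_)
    have hiT : (∀ j, 1 ≤ i j) ∧ ∑ j, ((i j : ℝ) * c j) ^ 2 ≤ lam := by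
      rw [hF_def] at hi
      exact hfinT.mem_toFinset.1 hi
    intro x hx
    constructor
    · intro j
      have hxj := hx j (Set.mem_univ j)
      simp only [Set.mem_Ioc] at hxj
      have h1 : (0 : ℝ) ≤ ((i j : ℝ) - 1) * c j := by
        have : (1 : ℝ) ≤ i j := by exact_mod_cast hiT.1 j
        have := hc j
        nlinarith
      linarith [hxj.1]
    · rw [hr2]
      refine le_trans (Finset.sum_le_sum fun j _ => ?_) hiT.2
      have hxj := hx j (Set.mem_univ j)
      simp only [Set.mem_Ioc] at hxj
      have h1 : (0 : ℝ) ≤ ((i j : ℝ) - 1) * c j := by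
        have : (1 : ℝ) ≤ i j := by exact_mod_cast hiT.1 j
        have := hc j
        nlinarith
      have hx0 : 0 < x j := lt_of_le_of_lt h1 hxj.1
      exact pow_le_pow_left₀ hx0.le hxj.2 2
  -- lower bound : volume (orthBall n (r - d')) ≤ F'.card * C'
  have hlower : volume (orthBall n (r - d')) ≤ (F'.card : ℝ≥0∞) * C' := by
    have hsub : orthBall n (r - d') ⊆ ⋃ i ∈ F', cell c' i := by
      intro x hx
      obtain ⟨hx1, hx2⟩ := hx
      set i : Fin n → ℕ := fun j => ⌈x j / c' j⌉₊ with hi_def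
      have hcellmem : x ∈ cell c' i := by
        intro j _
        simp only [Set.mem_Ioc]
        have hdiv : 0 < x j / c' j := div_pos (hx1 j) (hc' j)
        constructor
        · have h1 : (⌈x j / c' j⌉₊ : ℝ) < x j / c' j + 1 := Nat.ceil_lt_add_one hdiv.le
          have h2 : ((i j : ℝ) - 1) < x j / c' j := by
            simp only [hi_def]; linarith
          calc ((i j : ℝ) - 1) * c' j < (x j / c' j) * c' j :=
                mul_lt_mul_of_pos_right h2 (hc' j)
            _ = x j := div_mul_cancel₀ (x j) (hc' j).ne'
        · have h1 : x j / c' j ≤ (⌈x j / c' j⌉₊ : ℝ) := Nat.le_ceil _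
          calc x j = (x j / c' j) * c' j := (div_mul_cancel₀ (x j) (hc' j).ne').symm
            _ ≤ (i j : ℝ) * c' j := mul_le_mul_of_nonneg_right h1 (hc' j).le
      have hone : ∀ j, 1 ≤ i j := fun j =>
        Nat.ceil_pos.2 (div_pos (hx1 j) (hc' j))
      -- corner bound via triangle inequality in Euclidean space
      have hcorner : ∑ j, ((i j : ℝ) * c' j) ^ 2 ≤ lam := by
        set u : EuclideanSpace ℝ (Fin n) := WithLp.toLp 2 (fun j => x j) with hu_def
        set v : EuclideanSpace ℝ (Fin n) := WithLp.toLp 2 (fun j => (i j : ℝ) * c' j - x j) with hv_def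
        have hbound : ∀ j, 0 ≤ v j ∧ v j ≤ c' j := by
          intro j
          have hm := hcellmem j (Set.mem_univ j)
          simp only [Set.mem_Ioc] at hm
          constructor
          · simp only [hv_def]; linarith [hm.2]
          · simp only [hv_def]
            have : ((i j : ℝ) - 1) * c' j < x j := hm.1
            nlinarith [hc' j]
        have hnormu : ‖u‖ ≤ r - d' := by
          rw [EuclideanSpace.norm_eq]
          have : ∑ j, ‖u j‖ ^ 2 = ∑ j, x j ^ 2 := by
            refine Finset.sum_congr rfl fun j _ => ?_
            rw [Real.norm_eq_abs, sq_abs]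
          rw [this]
          calc Real.sqrt (∑ j, x j ^ 2) ≤ Real.sqrt ((r - d') ^ 2) :=
                Real.sqrt_le_sqrt hx2
            _ = r - d' := Real.sqrt_sq hrd'.le
        have hnormv : ‖v‖ ≤ d' := by
          rw [EuclideanSpace.norm_eq]
          have h1 : ∑ j, ‖v j‖ ^ 2 ≤ ∑ j, c' j ^ 2 := by
            refine Finset.sum_le_sum fun j _ => ?_
            rw [Real.norm_eq_abs, sq_abs]
            have := hbound j
            nlinarith [this.1, this.2]
          have h2 : ∑ j, c' j ^ 2 = d' ^ 2 := by
            rw [hd']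
            refine Finset.sum_congr rfl fun j _ => ?_
            rw [hc'_def]
            rw [div_pow]
          calc Real.sqrt (∑ j, ‖v j‖ ^ 2) ≤ Real.sqrt (d' ^ 2) :=
                Real.sqrt_le_sqrt (h1.trans h2.le)
            _ = d' := Real.sqrt_sq hd'0
        have hsumeq : ∑ j, ((i j : ℝ) * c' j) ^ 2 = ‖u + v‖ ^ 2 := by
          rw [EuclideanSpace.norm_eq, Real.sq_sqrt (Finset.sum_nonneg fun j _ => by positivity)]
          refine Finset.sum_congr rfl fun j _ => ?_
          have : (u + v) j = (i j : ℝ) * c' j := by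
            simp only [hu_def, hv_def]
            show x j + ((i j : ℝ) * c' j - x j) = _
            ring
          rw [Real.norm_eq_abs, sq_abs, this]
        rw [hsumeq, ← hr2]
        have htr : ‖u + v‖ ≤ r := le_trans (norm_add_le u v) (by linarith)
        exact pow_le_pow_left₀ (norm_nonneg _) htr 2
      have hiF' : i ∈ F' := by
        rw [hF'_def, hfinT'.mem_toFinset]
        exact ⟨hone, hcorner⟩
      exact Set.mem_biUnion hiF' hcellmem
    calc volume (orthBall n (r - d')) ≤ volume (⋃ i ∈ F', cell c' i) := measure_mono hsub
      _ = (F'.card : ℝ≥0∞) * C' := by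
          rw [measure_biUnion_finset (fun i _ k _ hik => cell_disjoint hc' hik)
            (fun i _ => measurable_cell c' i)]
          simp [volume_cell, Finset.sum_const, nsmul_eq_mul, hC'_def]
  -- scaling
  have hscal : volume (orthBall n (r - d')) = ENNReal.ofReal s ^ n * volume (orthBall n r) := by
    rw [← hsr]
    exact volume_orthBall_smul hs0 r
  -- comparison of cell volumes : C' ≤ C * s^n
  have hCC : C' ≤ C * ENNReal.ofReal s ^ n := by
    rw [hC_def, hC'_def, ← ENNReal.ofReal_prod_of_nonneg (fun j _ => (hc j).le),
      ← ENNReal.ofReal_prod_of_nonneg (fun j _ => (hc' j).le),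
      ← ENNReal.ofReal_pow hs0.le,
      ← ENNReal.ofReal_mul (Finset.prod_nonneg fun j _ => (hc j).le)]
    refine ENNReal.ofReal_le_ofReal ?_
    have h1 : ∏ j, c j = Real.pi ^ n / P := by
      rw [hc_def]
      rw [Finset.prod_div_distrib, Finset.prod_const, Finset.card_univ, Fintype.card_fin]
    have h2 : ∏ j, c' j = Real.pi ^ n / P' := by
      rw [hc'_def]
      rw [Finset.prod_div_distrib, Finset.prod_const, Finset.card_univ, Fintype.card_fin]
    rw [h1, h2]
    have hPP : P ≤ s ^ n * P' := by
      have htsn : t ^ n ≤ s ^ n := pow_le_pow_left₀ ht0.le hts.le n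
      have hPeq : P = t ^ n * P' := by rw [htn, div_mul_cancel₀ _ hP'.ne']
      nlinarith
    rw [div_mul_eq_mul_div, div_le_div_iff₀ hP' hP]
    calc Real.pi ^ n * P ≤ Real.pi ^ n * (s ^ n * P') :=
          mul_le_mul_of_nonneg_left hPP (pow_pos hπ n).le
      _ = Real.pi ^ n * s ^ n * P' := by ring
  -- combine everything in ℝ≥0∞
  have hK0 : C * ENNReal.ofReal s ^ n ≠ 0 := by
    apply mul_ne_zero
    · rw [hC_def]
      exact (Finset.prod_ne_zero_iff).2 fun j _ => by
        simp [ENNReal.ofReal_eq_zero, not_le, hc j]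
    · exact pow_ne_zero _ (by simp [ENNReal.ofReal_eq_zero, not_le, hs0])
  have hKtop : C * ENNReal.ofReal s ^ n ≠ ⊤ := by
    apply ENNReal.mul_ne_top
    · rw [hC_def]
      exact (ENNReal.prod_lt_top (fun j _ => ENNReal.ofReal_lt_top)).ne
    · exact (ENNReal.pow_ne_top ENNReal.ofReal_ne_top)
  have hchain : (F.card : ℝ≥0∞) * (C * ENNReal.ofReal s ^ n)
      ≤ (F'.card : ℝ≥0∞) * (C * ENNReal.ofReal s ^ n) := by
    calc (F.card : ℝ≥0∞) * (C * ENNReal.ofReal s ^ n)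
        = ((F.card : ℝ≥0∞) * C) * ENNReal.ofReal s ^ n := by ring
      _ ≤ volume (orthBall n r) * ENNReal.ofReal s ^ n :=
          mul_le_mul_left hupper _
      _ = volume (orthBall n (r - d')) := by rw [hscal]; ring
      _ ≤ (F'.card : ℝ≥0∞) * C' := hlower
      _ ≤ (F'.card : ℝ≥0∞) * (C * ENNReal.ofReal s ^ n) := mul_le_mul_right hCC _
  have hcard : F.card ≤ F'.card := by
    have h := (ENNReal.mul_le_mul_iff_left hK0 hKtop).1 hchain
    exact_mod_cast h
  -- identify Nat.card with Finset card
  have hcast : ∀ (b : Fin n → ℝ), (fun i : Fin n → ℕ =>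
      (∀ j, 1 ≤ i j) ∧ ∑ j, ((i j : ℝ) * Real.pi / b j) ^ 2 ≤ lam)
      = (fun i => (∀ j, 1 ≤ i j) ∧ ∑ j, ((i j : ℝ) * (Real.pi / b j)) ^ 2 ≤ lam) := by
    intro b
    funext i
    simp only [eq_iff_iff]
    constructor <;> (rintro ⟨h1, h2⟩; refine ⟨h1, ?_⟩)
    · calc ∑ j, ((i j : ℝ) * (Real.pi / b j)) ^ 2
          = ∑ j, ((i j : ℝ) * Real.pi / b j) ^ 2 := by
            refine Finset.sum_congr rfl fun j _ => ?_; rw [hmul]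
        _ ≤ lam := h2
    · calc ∑ j, ((i j : ℝ) * Real.pi / b j) ^ 2
          = ∑ j, ((i j : ℝ) * (Real.pi / b j)) ^ 2 := by
            refine Finset.sum_congr rfl fun j _ => ?_; rw [hmul]
        _ ≤ lam := h2
  have hNc : Nat.card {i : Fin n → ℕ //
      (∀ j, 1 ≤ i j) ∧ ∑ j, ((i j : ℝ) * Real.pi / a j) ^ 2 ≤ lam} = F.card := by
    rw [hF_def, ← Set.ncard_eq_toFinset_card _ hfinT, ← Nat.card_coe_set_eq]
    congr 1
    rw [hcast a]
    rfl
  have hNc' : Nat.card {i : Fin n → ℕ //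
      (∀ j, 1 ≤ i j) ∧ ∑ j, ((i j : ℝ) * Real.pi / a' j) ^ 2 ≤ lam} = F'.card := by
    rw [hF'_def, ← Set.ncard_eq_toFinset_card _ hfinT', ← Nat.card_coe_set_eq]
    congr 1
    rw [hcast a']
    rfl
  rw [hNc, hNc']
  exact hcard
end

section
/- Let $(\lambda_k)$ and $(\mu_k)$ be nondecreasing sequences of nonnegative reals tending to infinity with $\lambda_k \le \mu_k$ for all $k$ in some set $I$ of upper natural density $1$, and suppose additionally that both sequences satisfy Weyl asymptotics $N_\lambda(x) \sim c x^{n/2}$, $N_\mu(x) \sim c' x^{n/2}$ with positive constants as $x \to \infty$. Then $c \ge c'$. -/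
open Filter

/-- Eigenvalue domination on a density-one set of indices, together with Weyl
asymptotics for both counting functions, forces the Weyl coefficients to be
comparable. -/
theorem stmt16 (n : ℕ) (hn : 1 ≤ n) (l m : ℕ → ℝ)
    (hl : Monotone l) (hm : Monotone m) (hl0 : ∀ k, 0 ≤ l k) (hm0 : ∀ k, 0 ≤ m k)
    (hllim : Tendsto l atTop atTop) (hmlim : Tendsto m atTop atTop)
    (I : Set ℕ)
    (hI : Filter.limsup (fun N : ℕ => (Nat.card ↥(I ∩ Set.Iio N) : ℝ) / N) atTop = 1)
    (hdom : ∀ k ∈ I, l k ≤ m k)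
    (c c' : ℝ) (hc : 0 < c) (hc' : 0 < c')
    (hW : Tendsto (fun x : ℝ =>
      (Nat.card {k : ℕ | l k ≤ x} : ℝ) / (c * x ^ ((n : ℝ) / 2)))
      atTop (nhds 1))
    (hW' : Tendsto (fun x : ℝ =>
      (Nat.card {k : ℕ | m k ≤ x} : ℝ) / (c' * x ^ ((n : ℝ) / 2)))
      atTop (nhds 1)) :
    c' ≤ c := by
  set q : ℝ := (n : ℝ) / 2 with hqdef
  have hq0 : 0 < q := by
    have : (0:ℝ) < (n:ℝ) := by exact_mod_cast Nat.lt_of_lt_of_le Nat.zero_lt_one hn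
    positivity
  -- finiteness of the counting sets
  have hfl : ∀ x : ℝ, {k : ℕ | l k ≤ x}.Finite := by
    intro x
    obtain ⟨K, hK⟩ := (hllim.eventually (eventually_gt_atTop x)).exists_forall_of_atTop
    exact (Set.finite_Iio K).subset fun k hk => by
      by_contra h
      exact absurd hk (not_le.mpr (hK k (le_of_not_gt h)))
  -- shorthand for the counting functions
  set Nl : ℝ → ℝ := fun x => (Nat.card {k : ℕ | l k ≤ x} : ℝ) with hNl
  set Nm : ℝ → ℝ := fun x => (Nat.card {k : ℕ | m k ≤ x} : ℝ) with hNm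
  set y : ℕ → ℝ := fun N => m (N - 1) with hy
  have hytop : Tendsto y atTop atTop := hmlim.comp (tendsto_sub_atTop_nat 1)
  -- the comparison sequence
  set G : ℝ → ℝ := fun x => Nl x / (Nm (x - 1) + 1) with hG
  -- Step 1: eventual pointwise bound on the density sequence
  have key : ∀ᶠ N in atTop,
      (Nat.card ↥(I ∩ Set.Iio N) : ℝ) / N ≤ G (y N) := by
    filter_upwards [eventually_ge_atTop 1] with N hN1
    have hsub1 : I ∩ Set.Iio N ⊆ {k : ℕ | l k ≤ y N} := by
      rintro k ⟨hkI, hk⟩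
      exact le_trans (hdom k hkI) (hm (Nat.le_pred_of_lt hk))
    have ha : (Nat.card ↥(I ∩ Set.Iio N) : ℝ) ≤ Nl (y N) := by
      simp only [hNl]
      exact_mod_cast Nat.card_mono (hfl (y N)) hsub1
    have hsub2 : {k : ℕ | m k ≤ y N - 1} ⊆ Set.Iio (N - 1) := by
      intro k hk
      by_contra h
      have h1 : m (N - 1) ≤ m k := hm (le_of_not_gt h)
      have h2 : m k ≤ y N - 1 := hk
      simp only [hy] at h2
      linarith
    have hb : Nm (y N - 1) + 1 ≤ (N : ℝ) := by
      have h1 : Nat.card {k : ℕ | m k ≤ y N - 1} ≤ N - 1 := by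
        have := Nat.card_mono (Set.finite_Iio (N - 1)) hsub2
        simpa using this
      have h2 : (Nat.card {k : ℕ | m k ≤ y N - 1} : ℝ) ≤ ((N - 1 : ℕ) : ℝ) := by
        exact_mod_cast h1
      have h3 : ((N - 1 : ℕ) : ℝ) = (N : ℝ) - 1 := by
        have := Nat.cast_sub hN1 (R := ℝ)
        simpa using this
      simp only [hNm]
      rw [h3] at h2
      linarith
    have hdpos : (0:ℝ) < Nm (y N - 1) + 1 := by
      have h0 : (0:ℝ) ≤ Nm (y N - 1) := by simp only [hNm]; positivity
      linarith
    have ha0 : (0:ℝ) ≤ Nl (y N) := by simp only [hNl]; positivity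
    exact div_le_div₀ ha0 ha hdpos hb
  -- Step 2: the comparison function converges to c / c' along atTop
  have hGlim : Tendsto G atTop (nhds (c / c')) := by
    have hsub : Tendsto (fun x : ℝ => x - 1) atTop atTop := by
      simpa [sub_eq_add_neg] using tendsto_atTop_add_const_right atTop (-1 : ℝ) tendsto_id
    have h1 : Tendsto (fun x : ℝ => Nl x / (c * x ^ q)) atTop (nhds 1) := hW
    have h2 : Tendsto (fun x : ℝ => Nm (x - 1) / (c' * (x - 1) ^ q)) atTop (nhds 1) :=
      hW'.comp hsub
    have h3 : Tendsto (fun x : ℝ => c' * (x - 1) ^ q) atTop atTop :=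
      ((tendsto_rpow_atTop hq0).comp hsub).const_mul_atTop hc'
    have h4 : Tendsto (fun x : ℝ => (Nm (x - 1) + 1) / (c' * (x - 1) ^ q)) atTop (nhds 1) := by
      have h0 : Tendsto (fun x : ℝ => (c' * (x - 1) ^ q)⁻¹) atTop (nhds 0) :=
        h3.inv_tendsto_atTop
      have hsum := h2.add h0
      rw [add_zero] at hsum
      refine hsum.congr fun x => ?_
      rw [add_div]
      simp [div_eq_mul_inv]
    have h5 : Tendsto (fun x : ℝ => c' * (x - 1) ^ q / (Nm (x - 1) + 1)) atTop (nhds 1) := by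
      have := h4.inv₀ one_ne_zero
      simpa [inv_div] using this
    have h6 : Tendsto (fun x : ℝ => (x / (x - 1)) ^ q) atTop (nhds 1) := by
      have hinv : Tendsto (fun x : ℝ => (x - 1)⁻¹) atTop (nhds 0) := hsub.inv_tendsto_atTop
      have hbase : Tendsto (fun x : ℝ => x / (x - 1)) atTop (nhds 1) := by
        have hsum : Tendsto (fun x : ℝ => 1 + (x - 1)⁻¹) atTop (nhds 1) := by
          simpa using (tendsto_const_nhds (x := (1:ℝ)) (f := atTop)).add hinv
        refine Tendsto.congr' ?_ hsum
        filter_upwards [eventually_gt_atTop (1:ℝ)] with x hx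
        have hx1 : x - 1 ≠ 0 := by linarith
        field_simp
        ring
      have := hbase.rpow_const (p := q) (Or.inl one_ne_zero)
      simpa using this
    -- combine
    have hprod : Tendsto (fun x : ℝ =>
        (Nl x / (c * x ^ q)) * (c' * (x - 1) ^ q / (Nm (x - 1) + 1)) *
          ((x / (x - 1)) ^ q) * (c / c')) atTop (nhds (c / c')) := by
      have := ((h1.mul h5).mul h6).mul_const (c / c')
      simpa using this
    refine Tendsto.congr' ?_ hprod
    filter_upwards [eventually_gt_atTop (1:ℝ)] with x hx
    have hx0 : (0:ℝ) < x := by linarith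
    have hx1 : (0:ℝ) < x - 1 := by linarith
    have hrx : (0:ℝ) < x ^ q := Real.rpow_pos_of_pos hx0 q
    have hrx1 : (0:ℝ) < (x - 1) ^ q := Real.rpow_pos_of_pos hx1 q
    have hNm1 : (0:ℝ) < Nm (x - 1) + 1 := by
      have h0 : (0:ℝ) ≤ Nm (x - 1) := by simp only [hNm]; positivity
      linarith
    rw [Real.div_rpow hx0.le hx1.le]
    simp only [hG]
    field_simp
  have hGylim : Tendsto (fun N => G (y N)) atTop (nhds (c / c')) := hGlim.comp hytop
  -- Step 3: compare limsups
  have hd0 : ∀ N : ℕ, (0:ℝ) ≤ (Nat.card ↥(I ∩ Set.Iio N) : ℝ) / N := by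
    intro N; positivity
  have hlb : IsBoundedUnder (· ≥ ·) atTop
      (fun N : ℕ => (Nat.card ↥(I ∩ Set.Iio N) : ℝ) / N) :=
    isBoundedUnder_of ⟨0, fun N => hd0 N⟩
  have hcob : IsCoboundedUnder (· ≤ ·) atTop
      (fun N : ℕ => (Nat.card ↥(I ∩ Set.Iio N) : ℝ) / N) :=
    hlb.isCoboundedUnder_le
  have hbdd : IsBoundedUnder (· ≤ ·) atTop (fun N => G (y N)) := hGylim.isBoundedUnder_le
  have hfin : (1:ℝ) ≤ c / c' := by
    have := limsup_le_limsup key hcob hbdd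
    rwa [hI, hGylim.limsup_eq] at this
  rw [le_div_iff₀ hc'] at hfin
  linarith
end

section
/- Let $\Lambda_1, \Lambda_2$ be full-rank lattices in $\mathbb{R}^n$ with equal covolumes $|\Lambda_1| = |\Lambda_2|$, and suppose that for all $t > 0$, $\sum_{k \in \Lambda_1^*} e^{-|k|^2 t} \le \sum_{k \in \Lambda_2^*} e^{-|k|^2 t}$, where $\Lambda^*$ denotes the dual lattice. Then, assuming the Jacobi theta identity $\sum_{k\in\Lambda^*} e^{-|k|^2 t} = \frac{|\Lambda|}{(4\pi t)^{n/2}} \sum_{\ell\in\Lambda} e^{-|\ell|^2/4t}$, the shortest nonzero vector of $\Lambda_1$ is at least as long as the shortest nonzero vector of $\Lambda_2$. -/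
open scoped RealInnerProductSpace

lemma sumZ {d : ℝ} (hd : 0 < d) : Summable fun k : ℤ => Real.exp (-(d * (k : ℝ) ^ 2)) := by
  have hnat : Summable fun n : ℕ => Real.exp (-(d * (n : ℝ) ^ 2)) := by
    refine Summable.of_nonneg_of_le (fun n => (Real.exp_pos _).le) (fun n => ?_)
      (summable_geometric_of_lt_one (Real.exp_pos (-d)).le (Real.exp_lt_one_iff.2 (by linarith)))
    rw [← Real.exp_nat_mul]
    apply Real.exp_le_exp.2
    have h1 : (n : ℝ) ≤ (n : ℝ) ^ 2 := by
      exact_mod_cast Nat.cast_le.2 (Nat.le_self_pow two_ne_zero n)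
    nlinarith
  apply Summable.of_nat_of_neg <;> simpa using hnat

lemma sumPi : ∀ (k : ℕ) {d : ℝ}, 0 < d →
    Summable fun m : Fin k → ℤ => Real.exp (-(d * ∑ i, (m i : ℝ) ^ 2)) := by
  intro k
  induction k with
  | zero => intro d hd; simpa using summable_of_finite_support (Set.toFinite _)
  | succ k ih =>
    intro d hd
    rw [← (Fin.consEquiv (fun _ : Fin (k+1) => ℤ)).summable_iff]
    have : (fun m : Fin (k+1) → ℤ => Real.exp (-(d * ∑ i, (m i : ℝ) ^ 2)))
          ∘ (Fin.consEquiv fun _ => ℤ)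
        = fun p : ℤ × (Fin k → ℤ) =>
          Real.exp (-(d * (p.1 : ℝ) ^ 2)) * Real.exp (-(d * ∑ i, (p.2 i : ℝ) ^ 2)) := by
      funext p
      simp only [Function.comp_apply, Fin.consEquiv_apply, Fin.sum_univ_succ, Fin.cons_zero,
        Fin.cons_succ, ← Real.exp_add]
      ring_nf
    rw [this]
    exact (sumZ hd).mul_of_nonneg (ih hd) (fun _ => (Real.exp_pos _).le)
      (fun _ => (Real.exp_pos _).le)

lemma sumLat {n : ℕ} (L : Submodule ℤ (EuclideanSpace ℝ (Fin n)))
    [DiscreteTopology L] [IsZLattice ℝ L] {s : ℝ} (hs : 0 < s) :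
    Summable fun l : L => Real.exp (-(s * ‖(l : EuclideanSpace ℝ (Fin n))‖ ^ 2)) := by
  haveI : Module.Finite ℤ L := ZLattice.module_finite ℝ L
  haveI : Module.Free ℤ L := ZLattice.module_free ℝ L
  set ι := Module.Free.ChooseBasisIndex ℤ L
  let b : Module.Basis ι ℤ L := Module.Free.chooseBasis ℤ L
  let B := b.ofZLatticeBasis ℝ L
  let T := B.equivFunL
  set C : ℝ := ‖(T : EuclideanSpace ℝ (Fin n) →L[ℝ] (ι → ℝ))‖ + 1 with hCdef
  have hC : 0 < C := by positivity
  set N : ℕ := Fintype.card ι + 1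
  have hN : (0 : ℝ) < N := by positivity
  set d : ℝ := s / (N * C ^ 2) with hd_def
  have hd : 0 < d := by positivity
  -- key coordinate bound
  have key : ∀ l : L, d * ∑ i, ((b.repr l i : ℝ)) ^ 2
      ≤ s * ‖(l : EuclideanSpace ℝ (Fin n))‖ ^ 2 := by
    intro l
    have hTx : ∀ i, (b.repr l i : ℝ) = T (l : EuclideanSpace ℝ (Fin n)) i := by
      intro i
      have h := Module.Basis.ofZLatticeBasis_repr_apply ℝ (L := L) b l i
      simp only [T, B, Module.Basis.equivFunL_apply, Module.Basis.equivFun_apply]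
      exact h.symm
    have h1 : ∑ i, ((b.repr l i : ℝ)) ^ 2 ≤ (N : ℝ) * ‖T (l : EuclideanSpace ℝ (Fin n))‖ ^ 2 := by
      calc ∑ i, ((b.repr l i : ℝ)) ^ 2
          ≤ ∑ _i : ι, ‖T (l : EuclideanSpace ℝ (Fin n))‖ ^ 2 := by
            apply Finset.sum_le_sum
            intro i _
            rw [hTx i, ← sq_abs]
            apply pow_le_pow_left₀ (abs_nonneg _)
            rw [← Real.norm_eq_abs]
            exact norm_le_pi_norm (T (l : EuclideanSpace ℝ (Fin n))) i
        _ = (Fintype.card ι : ℝ) * ‖T (l : EuclideanSpace ℝ (Fin n))‖ ^ 2 := by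
            rw [Finset.sum_const, Finset.card_univ, nsmul_eq_mul]
        _ ≤ (N : ℝ) * ‖T (l : EuclideanSpace ℝ (Fin n))‖ ^ 2 := by
            apply mul_le_mul_of_nonneg_right _ (sq_nonneg _)
            exact_mod_cast Nat.le_succ _
    have h2 : ‖T (l : EuclideanSpace ℝ (Fin n))‖ ≤ C * ‖(l : EuclideanSpace ℝ (Fin n))‖ := by
      calc ‖T (l : EuclideanSpace ℝ (Fin n))‖
          ≤ ‖(T : EuclideanSpace ℝ (Fin n) →L[ℝ] (ι → ℝ))‖ * ‖(l : EuclideanSpace ℝ (Fin n))‖ :=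
            (T : EuclideanSpace ℝ (Fin n) →L[ℝ] (ι → ℝ)).le_opNorm _
        _ ≤ C * ‖(l : EuclideanSpace ℝ (Fin n))‖ := by
            apply mul_le_mul_of_nonneg_right _ (norm_nonneg _)
            rw [hCdef]; linarith
    have h3 : ‖T (l : EuclideanSpace ℝ (Fin n))‖ ^ 2
        ≤ C ^ 2 * ‖(l : EuclideanSpace ℝ (Fin n))‖ ^ 2 := by
      nlinarith [norm_nonneg (T (l : EuclideanSpace ℝ (Fin n))), norm_nonneg
        (l : EuclideanSpace ℝ (Fin n))]
    have h4 : ∑ i, ((b.repr l i : ℝ)) ^ 2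
        ≤ (N : ℝ) * C ^ 2 * ‖(l : EuclideanSpace ℝ (Fin n))‖ ^ 2 := by nlinarith
    rw [hd_def, div_mul_eq_mul_div, div_le_iff₀ (by positivity)]
    calc s * ∑ i, ((b.repr l i : ℝ)) ^ 2
        ≤ s * ((N : ℝ) * C ^ 2 * ‖(l : EuclideanSpace ℝ (Fin n))‖ ^ 2) :=
          mul_le_mul_of_nonneg_left h4 hs.le
      _ = s * ‖(l : EuclideanSpace ℝ (Fin n))‖ ^ 2 * ((N : ℝ) * C ^ 2) := by ring
  -- summability of the comparison series
  have hsum : Summable fun l : L => Real.exp (-(d * ∑ i, ((b.repr l i : ℝ)) ^ 2)) := by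
    have hPi : Summable fun m : ι → ℤ => Real.exp (-(d * ∑ i, (m i : ℝ) ^ 2)) := by
      let σ := Fintype.equivFin ι
      let e : (Fin (Fintype.card ι) → ℤ) ≃ (ι → ℤ) :=
        Equiv.arrowCongr σ.symm (Equiv.refl ℤ)
      rw [← e.summable_iff]
      have : (fun m : ι → ℤ => Real.exp (-(d * ∑ i, (m i : ℝ) ^ 2))) ∘ e
          = fun m : Fin (Fintype.card ι) → ℤ => Real.exp (-(d * ∑ j, (m j : ℝ) ^ 2)) := by
        funext m
        simp only [Function.comp_apply, e, Equiv.arrowCongr_apply, Equiv.coe_refl,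
          Function.comp, Equiv.symm_symm]
        congr 1
        rw [neg_inj]
        congr 1
        exact Fintype.sum_equiv σ _ _ (fun i => rfl)
      rw [this]
      exact sumPi _ hd
    have : (fun l : L => Real.exp (-(d * ∑ i, ((b.repr l i : ℝ)) ^ 2)))
        = (fun m : ι → ℤ => Real.exp (-(d * ∑ i, (m i : ℝ) ^ 2))) ∘ (b.equivFun : L ≃ₗ[ℤ] (ι → ℤ)) := by
      funext l
      simp [Module.Basis.equivFun_apply]
    rw [this]
    exact hPi.comp_injective (b.equivFun.toEquiv.injective)
  refine Summable.of_nonneg_of_le (fun l => (Real.exp_pos _).le) (fun l => ?_) hsum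
  exact Real.exp_le_exp.2 (neg_le_neg (key l))

lemma sumLat' {n : ℕ} (L : Submodule ℤ (EuclideanSpace ℝ (Fin n)))
    [DiscreteTopology L] [IsZLattice ℝ L] {s : ℝ} (hs : 0 < s) :
    Summable fun l : L => Real.exp (-‖(l : EuclideanSpace ℝ (Fin n))‖ ^ 2 * s) :=
  (sumLat L hs).congr fun l => by ring_nf

lemma exists_ne_zero_mem {n : ℕ} (hn : 1 ≤ n) (L : Submodule ℤ (EuclideanSpace ℝ (Fin n)))
    [DiscreteTopology L] [IsZLattice ℝ L] : ∃ x ∈ L, x ≠ 0 := by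
  by_contra h
  push_neg at h
  have hbot : L = ⊥ := by
    rw [Submodule.eq_bot_iff]; exact h
  haveI : Nonempty (Fin n) := ⟨⟨0, hn⟩⟩
  obtain ⟨v, hv⟩ := exists_ne (0 : EuclideanSpace ℝ (Fin n))
  have hvmem : v ∈ Submodule.span ℝ (L : Set (EuclideanSpace ℝ (Fin n))) := by
    rw [IsZLattice.span_top]; trivial
  rw [hbot] at hvmem
  simp only [Submodule.bot_coe, Submodule.span_zero_singleton, Submodule.mem_bot] at hvmem
  exact hv hvmem

/-- If two isovolumetric lattices satisfy the Jacobi theta identity and the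
dual theta series of the first is dominated by that of the second, then the
systole of the first lattice is at least that of the second. -/
theorem stmt19 (n : ℕ) (hn : 1 ≤ n)
    (L1 L2 : Submodule ℤ (EuclideanSpace ℝ (Fin n)))
    [DiscreteTopology L1] [DiscreteTopology L2]
    [IsZLattice ℝ L1] [IsZLattice ℝ L2]
    (hcov : ZLattice.covolume L1 = ZLattice.covolume L2)
    (D1 D2 : Set (EuclideanSpace ℝ (Fin n)))
    (hD1 : D1 = {k | ∀ l ∈ L1, ∃ m : ℤ, ⟪k, l⟫ = (m : ℝ)})
    (hD2 : D2 = {k | ∀ l ∈ L2, ∃ m : ℤ, ⟪k, l⟫ = (m : ℝ)})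
    (hjac1 : ∀ t : ℝ, 0 < t →
      (∑' k : D1, Real.exp (-‖(k : EuclideanSpace ℝ (Fin n))‖ ^ 2 * t))
        = ZLattice.covolume L1 / (4 * Real.pi * t) ^ ((n : ℝ) / 2)
          * ∑' l : L1, Real.exp (-‖(l : EuclideanSpace ℝ (Fin n))‖ ^ 2 / (4 * t)))
    (hjac2 : ∀ t : ℝ, 0 < t →
      (∑' k : D2, Real.exp (-‖(k : EuclideanSpace ℝ (Fin n))‖ ^ 2 * t))
        = ZLattice.covolume L2 / (4 * Real.pi * t) ^ ((n : ℝ) / 2)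
          * ∑' l : L2, Real.exp (-‖(l : EuclideanSpace ℝ (Fin n))‖ ^ 2 / (4 * t)))
    (hdom : ∀ t : ℝ, 0 < t →
      (∑' k : D1, Real.exp (-‖(k : EuclideanSpace ℝ (Fin n))‖ ^ 2 * t))
        ≤ ∑' k : D2, Real.exp (-‖(k : EuclideanSpace ℝ (Fin n))‖ ^ 2 * t)) :
    sInf {r : ℝ | ∃ l ∈ L2, l ≠ 0 ∧ ‖l‖ = r}
      ≤ sInf {r : ℝ | ∃ l ∈ L1, l ≠ 0 ∧ ‖l‖ = r} := by
  classical
  set E := EuclideanSpace ℝ (Fin n)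
  set S1 := {r : ℝ | ∃ l ∈ L1, l ≠ 0 ∧ ‖l‖ = r} with hS1def
  set S2 := {r : ℝ | ∃ l ∈ L2, l ≠ 0 ∧ ‖l‖ = r} with hS2def
  have hS1ne : S1.Nonempty := by
    obtain ⟨x, hx, hxne⟩ := exists_ne_zero_mem hn L1
    exact ⟨‖x‖, x, hx, hxne, rfl⟩
  have hS2ne : S2.Nonempty := by
    obtain ⟨x, hx, hxne⟩ := exists_ne_zero_mem hn L2
    exact ⟨‖x‖, x, hx, hxne, rfl⟩
  have hS2bdd : BddBelow S2 := by
    refine ⟨0, fun r hr => ?_⟩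
    obtain ⟨l, -, -, rfl⟩ := hr
    exact norm_nonneg l
  -- Step A: theta comparison for the lattices themselves
  have hcovpos : 0 < ZLattice.covolume L2 := ZLattice.covolume_pos L2 _
  have key : ∀ s : ℝ, 0 < s →
      (∑' l : L1, Real.exp (-‖(l : E)‖ ^ 2 * s)) ≤ ∑' l : L2, Real.exp (-‖(l : E)‖ ^ 2 * s) := by
    intro s hs
    have ht : (0 : ℝ) < 1 / (4 * s) := by positivity
    have hd := hdom _ ht
    rw [hjac1 _ ht, hjac2 _ ht, hcov] at hd
    have hX : 0 < ZLattice.covolume L2 / (4 * Real.pi * (1 / (4 * s))) ^ ((n : ℝ) / 2) := by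
      have hpi := Real.pi_pos
      exact div_pos hcovpos (Real.rpow_pos_of_pos (by positivity) _)
    have hd' := (mul_le_mul_iff_right₀ hX).1 hd
    have harg : ∀ x : ℝ, -x / (4 * (1 / (4 * s))) = -x * s := by
      intro x; field_simp
    have e1 : (∑' l : L1, Real.exp (-‖(l : E)‖ ^ 2 / (4 * (1 / (4 * s)))))
        = ∑' l : L1, Real.exp (-‖(l : E)‖ ^ 2 * s) := tsum_congr fun l => by rw [harg]
    have e2 : (∑' l : L2, Real.exp (-‖(l : E)‖ ^ 2 / (4 * (1 / (4 * s)))))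
        = ∑' l : L2, Real.exp (-‖(l : E)‖ ^ 2 * s) := tsum_congr fun l => by rw [harg]
    rw [e1, e2] at hd'
    exact hd'
  -- Setup the contradiction
  by_contra hcon
  push_neg at hcon
  obtain ⟨r, hrS1, hrb⟩ := exists_lt_of_csInf_lt hS1ne hcon
  obtain ⟨l1, hl1mem, hl1ne, rfl⟩ := hrS1
  set a := ‖l1‖ with ha_def
  set b := sInf S2 with hb_def
  have ha0 : 0 ≤ a := norm_nonneg _
  have hb0 : 0 ≤ b := le_csInf hS2ne (fun r hr => by
    obtain ⟨l, -, -, rfl⟩ := hr; exact norm_nonneg l)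
  have hab : a < b := hrb
  have hc : 0 < b ^ 2 - a ^ 2 := by nlinarith
  have hsum1 : Summable fun l : L2 => Real.exp (-‖(l : E)‖ ^ 2) :=
    (sumLat' L2 one_pos).congr fun l => by rw [mul_one]
  set K : ℝ := ∑' l : L2, Real.exp (-‖(l : E)‖ ^ 2) with hK_def
  have hK1 : 1 ≤ K := by
    have := Summable.sum_le_tsum {(⟨0, L2.zero_mem⟩ : L2)}
      (fun l _ => (Real.exp_pos _).le) hsum1
    simpa using this
  set K' : ℝ := K * Real.exp (b ^ 2) with hK'_def
  have hK'1 : 1 ≤ K' := by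
    have := Real.one_le_exp (sq_nonneg b)
    nlinarith
  have hK'0 : 0 < K' := by linarith
  set c : ℝ := b ^ 2 - a ^ 2 with hc_def
  set s : ℝ := max 1 ((Real.log K' + 1) / c) with hs_def
  have hs1 : 1 ≤ s := le_max_left _ _
  have hs0 : 0 < s := lt_of_lt_of_le one_pos hs1
  -- lower bound for L1 theta
  have hlow : 1 + Real.exp (-a ^ 2 * s) ≤ ∑' l : L1, Real.exp (-‖(l : E)‖ ^ 2 * s) := by
    set z : L1 := ⟨0, L1.zero_mem⟩ with hz
    set w : L1 := ⟨l1, hl1mem⟩ with hw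
    have hzw : z ≠ w := by
      intro h
      exact hl1ne (by simpa [hz, hw, eq_comm] using congrArg (Subtype.val) h)
    have hsum := Summable.sum_le_tsum ({z, w} : Finset L1)
      (fun l _ => (Real.exp_pos _).le) (sumLat' L1 hs0)
    rw [Finset.sum_pair hzw] at hsum
    have hz0 : ((z : E)) = 0 := rfl
    have hw0 : ((w : E)) = l1 := rfl
    rw [hz0, hw0] at hsum
    simpa using hsum
  -- upper bound for L2 theta
  have hupp : (∑' l : L2, Real.exp (-‖(l : E)‖ ^ 2 * s))
      ≤ 1 + Real.exp (-(b ^ 2 * (s - 1))) * K := by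
    set z2 : L2 := ⟨0, L2.zero_mem⟩ with hz2
    have hsum2 := sumLat' L2 hs0
    rw [Summable.tsum_eq_add_tsum_ite hsum2 z2]
    have hz20 : ((z2 : E)) = 0 := rfl
    have hfz : Real.exp (-‖(z2 : E)‖ ^ 2 * s) = 1 := by rw [hz20]; simp
    rw [hfz]
    gcongr 1 + ?_
    have hbound : ∀ x : L2, (if x = z2 then 0 else Real.exp (-‖(x : E)‖ ^ 2 * s))
        ≤ Real.exp (-(b ^ 2 * (s - 1))) * Real.exp (-‖(x : E)‖ ^ 2) := by
      intro x
      by_cases hx : x = z2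
      · simp only [hx, if_pos rfl]
        positivity
      · rw [if_neg hx]
        have hxne : (x : E) ≠ 0 := by
          intro h0
          exact hx (Subtype.ext (by rw [h0, hz20]))
        have hbx : b ≤ ‖(x : E)‖ := csInf_le hS2bdd ⟨(x : E), x.2, hxne, rfl⟩
        have hbx2 : b ^ 2 ≤ ‖(x : E)‖ ^ 2 := by nlinarith [norm_nonneg (x : E)]
        rw [← Real.exp_add]
        apply Real.exp_le_exp.2
        nlinarith
    have hsumite : Summable fun x : L2 => (if x = z2 then 0 else Real.exp (-‖(x : E)‖ ^ 2 * s)) := by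
      refine Summable.of_nonneg_of_le (fun x => ?_) (fun x => ?_) hsum2
      · by_cases hx : x = z2 <;> simp [hx, (Real.exp_pos _).le]
      · by_cases hx : x = z2 <;> simp [hx, (Real.exp_pos _).le]
    have hsumrhs : Summable fun x : L2 =>
        Real.exp (-(b ^ 2 * (s - 1))) * Real.exp (-‖(x : E)‖ ^ 2) :=
      hsum1.mul_left _
    calc (∑' x : L2, if x = z2 then 0 else Real.exp (-‖(x : E)‖ ^ 2 * s))
        ≤ ∑' x : L2, Real.exp (-(b ^ 2 * (s - 1))) * Real.exp (-‖(x : E)‖ ^ 2) :=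
          Summable.tsum_le_tsum hbound hsumite hsumrhs
      _ = Real.exp (-(b ^ 2 * (s - 1))) * K := by rw [tsum_mul_left, hK_def]
  -- combine
  have hchain : 1 + Real.exp (-a ^ 2 * s) ≤ 1 + Real.exp (-(b ^ 2 * (s - 1))) * K :=
    le_trans hlow (le_trans (key s hs0) hupp)
  have hstep : Real.exp (-a ^ 2 * s) ≤ K' * Real.exp (-(b ^ 2 * s)) := by
    have h1 : Real.exp (-(b ^ 2 * (s - 1))) * K = K' * Real.exp (-(b ^ 2 * s)) := by
      rw [hK'_def, show -(b ^ 2 * (s - 1)) = b ^ 2 + -(b ^ 2 * s) by ring, Real.exp_add]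
      ring
    linarith [hchain, h1.symm.le, h1.le]
  have hfin : Real.exp (c * s) ≤ K' := by
    have hexp : Real.exp (c * s) = Real.exp (-a ^ 2 * s) / Real.exp (-(b ^ 2 * s)) := by
      rw [← Real.exp_sub]
      congr 1
      rw [hc_def]; ring
    rw [hexp, div_le_iff₀ (Real.exp_pos _)]
    exact hstep
  have hcs : c * s ≤ Real.log K' := (Real.le_log_iff_exp_le hK'0).2 hfin
  have hcs2 : Real.log K' + 1 ≤ c * s := by
    have h1 : (Real.log K' + 1) / c ≤ s := le_max_right _ _
    calc Real.log K' + 1 = c * ((Real.log K' + 1) / c) := by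
          field_simp
      _ ≤ c * s := mul_le_mul_of_nonneg_left h1 hc.le
  linarith
end
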